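/- Let q be an odd prime, let r ∈ [1, q−1] be an integer with r² ≡ −1 (mod q), and let G be a finite group of order 4q generated by elements α and τ satisfying α^q = 1, τ⁴ = 1, and ατ = τα^r. Then d(G) = q + 2. -/

import Mathlib

/-- The set of all products of the terms of the multiset `S` taken in some order. -/
def prodSet {G : Type*} [Group G] (S : Multiset G) : Set G :=
  {g | ∃ l : List G, (l : Multiset G) = S ∧ l.prod = g}

/-- A sequence (multiset) over `G` is a product-one sequence if its terms can be
ordered so that their product is `1`. -/
def IsProductOne {G : Type*} [Group G] (S : Multiset G) : Prop :=
  (1 : G) ∈ prodSet S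

/-- A minimal product-one sequence (atom): a nontrivial product-one sequence that cannot
be partitioned into two nontrivial product-one subsequences. -/
def IsMinimalProductOne {G : Type*} [Group G] (S : Multiset G) : Prop :=
  S ≠ 0 ∧ IsProductOne S ∧
    ¬ ∃ T₁ T₂ : Multiset G, T₁ ≠ 0 ∧ T₂ ≠ 0 ∧ S = T₁ + T₂ ∧
      IsProductOne T₁ ∧ IsProductOne T₂

/-- The small Davenport constant: the maximal length of a sequence over `G` having
no nontrivial product-one subsequence. -/
noncomputable def smallDavenport (G : Type*) [Group G] : ℕ :=
  sSup {n | ∃ S : Multiset G, Multiset.card S = n ∧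
    ∀ T : Multiset G, T ≤ S → T ≠ 0 → ¬ IsProductOne T}

/-- The large Davenport constant: the maximal length of a minimal product-one sequence. -/
noncomputable def largeDavenport (G : Type*) [Group G] : ℕ :=
  sSup {n | ∃ S : Multiset G, Multiset.card S = n ∧ IsMinimalProductOne S}

/-- A coordinate system on `G` realizing it as a quotient-`C₄` extension of `C_q`. -/
structure DavCoord (q : ℕ) (G : Type*) [Group G] where
  R : ZMod q
  e : G → ZMod 4
  a : G → ZMod q
  β : G
  hRinj : Function.Injective (fun f : ZMod 4 => R ^ f.val)
  hR0 : R ≠ 0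
  hR4 : R ^ 4 = 1
  e_mul : ∀ g h, e (g * h) = e g + e h
  a_mul : ∀ g h, a (g * h) = a g * R ^ (e h).val + a h
  e_pow : ∀ u : ZMod q, e (β ^ u.val) = 0
  a_pow : ∀ u : ZMod q, a (β ^ u.val) = u
  recon : ∀ g, e g = 0 → g = β ^ (a g).val

namespace DavCoord

variable {q : ℕ} {G : Type*} [Group G] (C : DavCoord q G)

lemma e_one : C.e 1 = 0 := by
  have := C.e_pow 0
  rwa [ZMod.val_zero, pow_zero] at this

lemma a_one : C.a 1 = 0 := by
  have := C.a_pow 0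
  rwa [ZMod.val_zero, pow_zero] at this

def A (u : ZMod q) : G := C.β ^ u.val

lemma e_A (u : ZMod q) : C.e (C.A u) = 0 := C.e_pow u
lemma a_A (u : ZMod q) : C.a (C.A u) = u := C.a_pow u

lemma A_zero : C.A 0 = 1 := by simp [A, ZMod.val_zero]

lemma A_mul (u v : ZMod q) : C.A u * C.A v = C.A (u + v) := by
  have he : C.e (C.A u * C.A v) = 0 := by
    rw [C.e_mul, C.e_A, C.e_A, add_zero]
  have ha : C.a (C.A u * C.A v) = u + v := by
    rw [C.a_mul, C.e_A, C.a_A, C.a_A, ZMod.val_zero, pow_zero, mul_one]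
  have := C.recon _ he
  rw [ha] at this
  exact this

lemma A_eq_one_iff {u : ZMod q} : C.A u = 1 ↔ u = 0 := by
  constructor
  · intro h
    have := C.a_A u
    rw [h, C.a_one] at this
    exact this.symm
  · rintro rfl; exact C.A_zero

lemma eq_A (g : G) (hg : C.e g = 0) : g = C.A (C.a g) := C.recon g hg

lemma conj_a (g h : G) (hg : C.e g = 0) :
    C.a (h⁻¹ * g * h) = C.a g * C.R ^ (C.e h).val := by
  have h1 : C.a (h⁻¹ * h) = C.a h⁻¹ * C.R ^ (C.e h).val + C.a h := C.a_mul _ _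
  rw [inv_mul_cancel, C.a_one] at h1
  have h2 : C.a (h⁻¹ * g * h) = C.a (h⁻¹ * (g * h)) := by rw [mul_assoc]
  rw [h2, C.a_mul, C.a_mul, C.e_mul, hg, zero_add]
  linear_combination h1.symm

lemma e_prod (l : List G) : C.e l.prod = (l.map C.e).sum := by
  induction l with
  | nil => simpa using C.e_one
  | cons x t ih => simp [C.e_mul, ih]

/-- Achievability: some ordering of `B` has product `C.A v`. -/
def Ach (B : Multiset G) (v : ZMod q) : Prop :=
  ∃ l : List G, (l : Multiset G) = B ∧ l.prod = C.A v

/-- A good block: nonempty, `e`-sum zero, with pairwise distinct prefix `e`-sums. -/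
def Good (B : Multiset G) : Prop :=
  ∃ l : List G, (l : Multiset G) = B ∧ l ≠ [] ∧ (l.map C.e).sum = 0 ∧
    ((List.range l.length).map (fun i => ((l.take i).map C.e).sum)).Nodup

/-- No nonempty subsequence is product-one. -/
def ZPF (S : Multiset G) : Prop := ∀ T ≤ S, T ≠ 0 → ¬ IsProductOne T

lemma master (hq : q.Prime) {S B : Multiset G} (hzpf : ZPF S) (hBS : B ≤ S)
    (hgood : C.Good B) :
    ∃ V : Finset (ZMod q), Multiset.card B ≤ V.card ∧ ∀ v ∈ V, C.Ach B v := by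
  haveI : Fact q.Prime := ⟨hq⟩
  obtain ⟨l, hlB, hlne, hsum, hnodup⟩ := hgood
  have hBne : B ≠ 0 := by
    rw [← hlB]
    simpa using hlne
  have hprodne : l.prod ≠ 1 := by
    intro h
    exact hzpf B hBS hBne ⟨l, hlB, h⟩
  have he0 : C.e l.prod = 0 := by rw [C.e_prod, hsum]
  set A0 := C.a l.prod with hA0def
  have hA0 : A0 ≠ 0 := by
    intro h
    apply hprodne
    have := C.eq_A l.prod he0
    rw [← hA0def, h, C.A_zero] at this
    exact this
  set E : ℕ → ZMod 4 := fun i => ((l.take i).map C.e).sum with hEdef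
  refine ⟨(Finset.range l.length).image (fun i => A0 * C.R ^ (E i).val), ?_, ?_⟩
  · have hinj : Set.InjOn (fun i => A0 * C.R ^ (E i).val) ↑(Finset.range l.length) := by
      intro i hi j hj hij
      simp only [Finset.coe_range, Set.mem_Iio] at hi hj
      have h1 : C.R ^ (E i).val = C.R ^ (E j).val := by
        exact mul_left_cancel₀ hA0 hij
      have h2 : E i = E j := C.hRinj h1
      exact List.inj_on_of_nodup_map hnodup (List.mem_range.2 hi) (List.mem_range.2 hj) h2
    rw [Finset.card_image_of_injOn hinj, Finset.card_range]
    rw [← hlB, Multiset.coe_card]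
  · intro v hv
    simp only [Finset.mem_image, Finset.mem_range] at hv
    obtain ⟨i, hi, rfl⟩ := hv
    refine ⟨l.rotate i, ?_, ?_⟩
    · rw [← hlB]
      exact Multiset.coe_eq_coe.2 (l.rotate_perm i)
    · set t := (l.take i).prod with htdef
      have hrot : (l.rotate i).prod = t⁻¹ * l.prod * t := by
        rw [List.rotate_eq_drop_append_take (le_of_lt hi), List.prod_append]
        have : l.prod = t * (l.drop i).prod := by
          rw [htdef, ← List.prod_append, List.take_append_drop]
        rw [this]
        group
        rfl
      have het : C.e t = E i := by rw [htdef, C.e_prod]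
      have he0' : C.e ((l.rotate i).prod) = 0 := by
        rw [hrot, C.e_mul, C.e_mul]
        have h1 : C.e t⁻¹ + C.e t = 0 := by
          rw [← C.e_mul, inv_mul_cancel, C.e_one]
        calc C.e t⁻¹ + C.e l.prod + C.e t = C.e t⁻¹ + C.e t := by rw [he0, add_zero]
          _ = 0 := h1
      have ha' : C.a ((l.rotate i).prod) = A0 * C.R ^ (E i).val := by
        rw [hrot, C.conj_a _ _ he0, het]
      have := C.eq_A _ he0'
      rw [ha'] at this
      exact this

lemma zmod4_cases : ∀ z : ZMod 4, z ≠ 0 → z = 1 ∨ z = 2 ∨ z = 3 := by decide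

lemma pair_le {x y : G} {M : Multiset G} (hx : x ∈ M) (hy : y ∈ M) (hxy : x ≠ y) :
    ({x, y} : Multiset G) ≤ M := by
  obtain ⟨t, rfl⟩ := Multiset.exists_cons_of_mem hx
  have hy' : y ∈ t := by
    rcases Multiset.mem_cons.1 hy with h | h
    · exact absurd h.symm hxy
    · exact h
  obtain ⟨t', rfl⟩ := Multiset.exists_cons_of_mem hy'
  exact Multiset.cons_le_cons _ (Multiset.cons_le_cons _ (Multiset.zero_le _))

lemma extract2 {s : Multiset G} (h : 2 ≤ Multiset.card s) :
    ∃ x y t, s = x ::ₘ y ::ₘ t := by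
  obtain ⟨x, hx⟩ := Multiset.card_pos_iff_exists_mem.1 (show 0 < Multiset.card s by omega)
  obtain ⟨t, rfl⟩ := Multiset.exists_cons_of_mem hx
  rw [Multiset.card_cons] at h
  obtain ⟨y, hy⟩ := Multiset.card_pos_iff_exists_mem.1 (show 0 < Multiset.card t by omega)
  obtain ⟨t', rfl⟩ := Multiset.exists_cons_of_mem hy
  exact ⟨x, y, t', rfl⟩

lemma extract4 {s : Multiset G} (h : 4 ≤ Multiset.card s) :
    ∃ x y z w t, s = x ::ₘ y ::ₘ z ::ₘ w ::ₘ t := by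
  obtain ⟨x, y, t, rfl⟩ := extract2 (show 2 ≤ Multiset.card s by omega)
  simp only [Multiset.card_cons] at h
  obtain ⟨z, w, t', rfl⟩ := extract2 (show 2 ≤ Multiset.card t by omega)
  exact ⟨x, y, z, w, t', rfl⟩

lemma good_pair {x y : G} (hx : C.e x ≠ 0) (hsum : C.e x + C.e y = 0) :
    C.Good {x, y} := by
  refine ⟨[x, y], rfl, by simp, by simpa using hsum, ?_⟩
  have h2 : List.range 2 = [0, 1] := by decide
  simp only [List.length_cons, List.length_nil, h2, List.map_cons, List.map_nil,
    List.take_zero, List.take_succ_cons, List.take_zero, List.sum_nil, List.sum_cons,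
    add_zero, List.nodup_cons, List.mem_cons, List.not_mem_nil, or_false,
    List.mem_singleton, List.nodup_nil, and_true, not_false_iff]
  exact fun h => hx h.symm

lemma good_triple {x z y : G} {o : ZMod 4} (ho : o = 1 ∨ o = 3)
    (hx : C.e x = o) (hy : C.e y = o) (hz : C.e z = 2) :
    C.Good (x ::ₘ z ::ₘ y ::ₘ 0) := by
  refine ⟨[x, z, y], rfl, by simp, ?_, ?_⟩
  · simp only [List.map_cons, List.map_nil, List.sum_cons, List.sum_nil, add_zero,
      hx, hy, hz]
    rcases ho with rfl | rfl <;> decide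
  · have h3 : List.range 3 = [0, 1, 2] := by decide
    simp only [List.length_cons, List.length_nil, h3, List.map_cons, List.map_nil,
      List.take_zero, List.take_succ_cons, List.sum_nil, List.sum_cons, add_zero,
      hx, hy, hz]
    rcases ho with rfl | rfl <;> decide

lemma good_quad {x y z w : G} {o : ZMod 4} (ho : o = 1 ∨ o = 3)
    (hx : C.e x = o) (hy : C.e y = o) (hz : C.e z = o) (hw : C.e w = o) :
    C.Good (x ::ₘ y ::ₘ z ::ₘ w ::ₘ 0) := by
  refine ⟨[x, y, z, w], rfl, by simp, ?_, ?_⟩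
  · simp only [List.map_cons, List.map_nil, List.sum_cons, List.sum_nil, add_zero,
      hx, hy, hz, hw]
    rcases ho with rfl | rfl <;> decide
  · have h4 : List.range 4 = [0, 1, 2, 3] := by decide
    simp only [List.length_cons, List.length_nil, h4, List.map_cons, List.map_nil,
      List.take_zero, List.take_succ_cons, List.sum_nil, List.sum_cons, add_zero,
      hx, hy, hz, hw]
    rcases ho with rfl | rfl <;> decide

lemma exists_good_aux {o : ZMod 4} (ho : o = 1 ∨ o = 3) (M : Multiset G)
    (hall : ∀ x ∈ M, C.e x = o ∨ C.e x = 2) (h4 : 4 ≤ Multiset.card M)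
    (hc2 : Multiset.card (M.filter (fun g => C.e g = 2)) ≤ 1) :
    ∃ B, B ≤ M ∧ 0 < Multiset.card B ∧ C.Good B := by
  classical
  set f2 := M.filter (fun g => C.e g = 2) with hf2def
  set fo := M.filter (fun g => C.e g = o) with hfodef
  have hf2 : M.filter (fun g => ¬ C.e g = o) = f2 := by
    apply Multiset.filter_congr
    intro x hx
    rcases hall x hx with h | h <;> rcases ho with rfl | rfl <;> simp [h] <;> decide
  have hsplit : fo + f2 = M := by
    rw [← hf2, hfodef]
    exact Multiset.filter_add_not _ M
  have hcards : Multiset.card fo + Multiset.card f2 = Multiset.card M := by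
    rw [← Multiset.card_add, hsplit]
  by_cases h2 : Multiset.card f2 = 0
  · have hco : 4 ≤ Multiset.card fo := by omega
    obtain ⟨x, y, z, w, t, ht⟩ := extract4 hco
    have hmem : ∀ u ∈ fo, C.e u = o := fun u hu => (Multiset.mem_filter.1 hu).2
    refine ⟨x ::ₘ y ::ₘ z ::ₘ w ::ₘ 0, ?_, by simp, ?_⟩
    · calc x ::ₘ y ::ₘ z ::ₘ w ::ₘ 0 ≤ x ::ₘ y ::ₘ z ::ₘ w ::ₘ t := by
            exact Multiset.cons_le_cons _ (Multiset.cons_le_cons _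
              (Multiset.cons_le_cons _ (Multiset.cons_le_cons _ (Multiset.zero_le _))))
        _ = fo := ht.symm
        _ ≤ M := Multiset.filter_le _ _
    · refine C.good_quad ho (hmem x ?_) (hmem y ?_) (hmem z ?_) (hmem w ?_) <;>
        rw [ht] <;> simp
  · have hco : 2 ≤ Multiset.card fo := by omega
    obtain ⟨x, y, t, ht⟩ := extract2 hco
    obtain ⟨z, hz⟩ := Multiset.card_pos_iff_exists_mem.1 (show 0 < Multiset.card f2 by omega)
    have hmem : ∀ u ∈ fo, C.e u = o := fun u hu => (Multiset.mem_filter.1 hu).2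
    have hxy : ({x, y} : Multiset G) ≤ fo := by
      rw [ht]
      exact Multiset.cons_le_cons _ (Multiset.cons_le_cons _ (Multiset.zero_le _))
    refine ⟨x ::ₘ z ::ₘ y ::ₘ 0, ?_, by simp, ?_⟩
    · have heq : x ::ₘ z ::ₘ y ::ₘ 0 = ({x, y} : Multiset G) + ({z} : Multiset G) := by
        have h1 : z ::ₘ y ::ₘ (0 : Multiset G) = y ::ₘ z ::ₘ 0 := Multiset.cons_swap _ _ _
        rw [h1]
        rfl
      rw [heq, ← hsplit]
      exact add_le_add hxy (Multiset.singleton_le.2 hz)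
    · refine C.good_triple ho (hmem x ?_) (hmem y ?_) ((Multiset.mem_filter.1 hz).2)
      · rw [ht]; simp
      · rw [ht]; simp

lemma exists_good (M : Multiset G) (hM : ∀ x ∈ M, C.e x ≠ 0)
    (h4 : 4 ≤ Multiset.card M) :
    ∃ B, B ≤ M ∧ 0 < Multiset.card B ∧ C.Good B := by
  classical
  by_cases h13 : (∃ x ∈ M, C.e x = 1) ∧ (∃ y ∈ M, C.e y = 3)
  · obtain ⟨⟨x, hxM, hx⟩, ⟨y, hyM, hy⟩⟩ := h13
    have hxy : x ≠ y := fun h => by rw [h, hy] at hx; exact absurd hx (by decide)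
    refine ⟨{x, y}, pair_le hxM hyM hxy, by simp, C.good_pair ?_ ?_⟩
    · rw [hx]; decide
    · rw [hx, hy]; decide
  · by_cases h22 : 2 ≤ Multiset.card (M.filter (fun g => C.e g = 2))
    · obtain ⟨x, y, t, ht⟩ := extract2 h22
      have hmem : ∀ u ∈ M.filter (fun g => C.e g = 2), C.e u = 2 :=
        fun u hu => (Multiset.mem_filter.1 hu).2
      have hx : C.e x = 2 := hmem x (by rw [ht]; simp)
      have hy : C.e y = 2 := hmem y (by rw [ht]; simp)
      refine ⟨{x, y}, ?_, by simp, C.good_pair (by rw [hx]; decide) (by rw [hx, hy]; decide)⟩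
      calc ({x, y} : Multiset G) ≤ x ::ₘ y ::ₘ t :=
            Multiset.cons_le_cons _ (Multiset.cons_le_cons _ (Multiset.zero_le _))
        _ = M.filter (fun g => C.e g = 2) := ht.symm
        _ ≤ M := Multiset.filter_le _ _
    · push_neg at h22
      rcases not_and_or.1 h13 with h1 | h3
      · push_neg at h1
        have hall : ∀ x ∈ M, C.e x = 3 ∨ C.e x = 2 := by
          intro x hx
          rcases zmod4_cases _ (hM x hx) with h | h | h
          · exact absurd h (h1 x hx)
          · exact Or.inr h
          · exact Or.inl h
        exact C.exists_good_aux (Or.inr rfl) M hall h4 (by omega)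
      · push_neg at h3
        have hall : ∀ x ∈ M, C.e x = 1 ∨ C.e x = 2 := by
          intro x hx
          rcases zmod4_cases _ (hM x hx) with h | h | h
          · exact Or.inl h
          · exact Or.inr h
          · exact absurd h (h3 x hx)
        exact C.exists_good_aux (Or.inl rfl) M hall h4 (by omega)

lemma decomp (M : Multiset G) (hM : ∀ x ∈ M, C.e x ≠ 0) :
    ∃ (Bs : List (Multiset G)) (L : Multiset G),
      M = Bs.sum + L ∧ Multiset.card L ≤ 3 ∧ ∀ B ∈ Bs, C.Good B := by
  suffices h : ∀ (n : ℕ) (M : Multiset G), Multiset.card M = n → (∀ x ∈ M, C.e x ≠ 0) →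
      ∃ (Bs : List (Multiset G)) (L : Multiset G),
        M = Bs.sum + L ∧ Multiset.card L ≤ 3 ∧ ∀ B ∈ Bs, C.Good B by
    exact h _ M rfl hM
  classical
  intro n
  induction n using Nat.strong_induction_on with
  | _ n ih =>
    intro M hMn hM
    by_cases hn : Multiset.card M ≤ 3
    · exact ⟨[], M, by simp, hn, by simp⟩
    · obtain ⟨B, hBM, hBpos, hBgood⟩ := C.exists_good M hM (by omega)
      have hMeq : B + (M - B) = M := by
        rw [add_comm]
        exact tsub_add_cancel_of_le hBM
      have hcard : Multiset.card (M - B) < n := by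
        have := Multiset.card_le_card hBM
        have h2 : Multiset.card (M - B) = Multiset.card M - Multiset.card B :=
          Multiset.card_sub hBM
        omega
      obtain ⟨Bs, L, hML, hL, hgood⟩ := ih _ hcard (M - B) rfl
        (fun x hx => hM x (Multiset.mem_of_le (Multiset.sub_le_self _ _) hx))
      refine ⟨B :: Bs, L, ?_, hL, ?_⟩
      · rw [List.sum_cons, add_assoc, ← hML, hMeq]
      · intro B' hB'
        rcases List.mem_cons.1 hB' with rfl | h
        · exact hBgood
        · exact hgood B' h


lemma good_ne_zero {B : Multiset G} (h : C.Good B) : B ≠ 0 := by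
  obtain ⟨l, hl, hne, -, -⟩ := h
  rw [← hl]
  simpa using hne

lemma ach_add {B B' : Multiset G} {v v' : ZMod q} (h : C.Ach B v) (h' : C.Ach B' v') :
    C.Ach (B + B') (v + v') := by
  obtain ⟨l, hl, hp⟩ := h
  obtain ⟨l', hl', hp'⟩ := h'
  refine ⟨l ++ l', ?_, ?_⟩
  · rw [← Multiset.coe_add, hl, hl']
  · rw [List.prod_append, hp, hp', C.A_mul]

lemma ach_zero : C.Ach 0 0 :=
  ⟨[], Multiset.coe_nil, by rw [List.prod_nil, C.A_zero]⟩

lemma list_sum_ones {β : Type*} (l : List β) : (l.map (fun _ => (1 : ℕ))).sum = l.length := by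
  induction l with
  | nil => rfl
  | cons a t ih => simp [ih]; omega

lemma le_list_sum {β : Type*} {Bs : List (Multiset β)} {B : Multiset β} (h : B ∈ Bs) :
    B ≤ Bs.sum := by
  induction Bs with
  | nil => simp at h
  | cons a t ih =>
    rw [List.sum_cons]
    rcases List.mem_cons.1 h with rfl | h'
    · exact le_add_right le_rfl
    · exact le_trans (ih h') (le_add_left le_rfl)

lemma list_sum_singleton {β : Type*} (l : List β) :
    (l.map (fun x => ({x} : Multiset β))).sum = (l : Multiset β) := by
  induction l with
  | nil => simp
  | cons a t ih =>
    simp only [List.map_cons, List.sum_cons, ih]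
    rw [← Multiset.cons_coe, ← Multiset.singleton_add]

lemma card_list_sum {β : Type*} (Bs : List (Multiset β)) :
    Multiset.card Bs.sum = (Bs.map Multiset.card).sum := by
  induction Bs with
  | nil => simp
  | cons a t ih => simp [ih]

lemma choose_chunks {β γ : Type*} (P : β → γ → Prop) :
    ∀ (Bs : List β), (∀ B ∈ Bs, ∃ V, P B V) →
      ∃ δ : List (β × γ), δ.map Prod.fst = Bs ∧ ∀ c ∈ δ, P c.1 c.2 := by
  intro Bs
  induction Bs with
  | nil => exact fun _ => ⟨[], rfl, by simp⟩
  | cons B t ih =>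
    intro h
    obtain ⟨V, hV⟩ := h B (List.mem_cons_self)
    obtain ⟨δ, hδ1, hδ2⟩ := ih (fun B' hB' => h B' (List.mem_cons_of_mem _ hB'))
    refine ⟨(B, V) :: δ, by simp [hδ1], ?_⟩
    intro c hc
    rcases List.mem_cons.1 hc with rfl | hc'
    · exact hV
    · exact hδ2 c hc'

open Pointwise

/-- Sum-set of optional chunks. -/
def Wopt (δ : List (Multiset G × Finset (ZMod q))) : Finset (ZMod q) :=
  δ.foldr (fun c acc => insert (0 : ZMod q) c.2 + acc) {0}

lemma Wopt_nil : Wopt (G := G) (q := q) [] = {0} := rfl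

lemma Wopt_cons (c : Multiset G × Finset (ZMod q)) (t : List (Multiset G × Finset (ZMod q))) :
    Wopt (c :: t) = insert (0 : ZMod q) c.2 + Wopt t := rfl

lemma wopt_card (hq : q.Prime) (δ : List (Multiset G × Finset (ZMod q)))
    (h0 : ∀ c ∈ δ, (0 : ZMod q) ∉ c.2) :
    min q (1 + (δ.map (fun c => c.2.card)).sum) ≤ (Wopt δ).card := by
  induction δ with
  | nil =>
    simp only [Wopt_nil, Finset.card_singleton, List.map_nil, List.sum_nil]
    have := hq.two_le
    omega
  | cons c t ih =>
    have ht := ih (fun c' hc' => h0 c' (List.mem_cons_of_mem _ hc'))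
    have hne : (Wopt (G := G) t).Nonempty := by
      rw [← Finset.card_pos]
      have := hq.two_le
      omega
    have hcd := ZMod.cauchy_davenport hq (Finset.insert_nonempty 0 c.2) hne
    have hins : (insert (0 : ZMod q) c.2).card = c.2.card + 1 :=
      Finset.card_insert_of_notMem (h0 c (List.mem_cons_self))
    simp only [Wopt_cons, List.map_cons, List.sum_cons]
    rw [hins] at hcd
    omega

lemma wopt_ach (δ : List (Multiset G × Finset (ZMod q)))
    (hach : ∀ c ∈ δ, ∀ v ∈ c.2, C.Ach c.1 v) :
    ∀ w ∈ Wopt δ, ∃ T, T ≤ (δ.map Prod.fst).sum ∧ C.Ach T w := by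
  induction δ with
  | nil =>
    intro w hw
    simp only [Wopt_nil, Finset.mem_singleton] at hw
    subst hw
    exact ⟨0, le_rfl, C.ach_zero⟩
  | cons c t ih =>
    intro w hw
    rw [Wopt_cons, Finset.mem_add] at hw
    obtain ⟨y, hy, z, hz, rfl⟩ := hw
    obtain ⟨T', hT', hachT'⟩ := ih (fun c' hc' => hach c' (List.mem_cons_of_mem _ hc')) z hz
    rcases Finset.mem_insert.1 hy with rfl | hy'
    · refine ⟨T', ?_, by rwa [zero_add]⟩
      simp only [List.map_cons, List.sum_cons]
      exact le_trans hT' (le_add_left le_rfl)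
    · refine ⟨c.1 + T', ?_, ?_⟩
      · simp only [List.map_cons, List.sum_cons]
        exact add_le_add le_rfl hT'
      · exact C.ach_add (hach c (List.mem_cons_self) y hy') hachT'

include C in
theorem card_le (hq : q.Prime) {S : Multiset G} (hzpf : ZPF S) :
    Multiset.card S ≤ q + 2 := by
  classical
  haveI : Fact q.Prime := ⟨hq⟩
  haveI : NeZero q := ⟨hq.ne_zero⟩
  set S0 := S.filter (fun g => C.e g = 0) with hS0def
  set Sp := S.filter (fun g => ¬ C.e g = 0) with hSpdef
  have hS : S0 + Sp = S := Multiset.filter_add_not _ S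
  obtain ⟨Bs, L, hSp, hL, hBs⟩ := C.decomp Sp (fun x hx => (Multiset.mem_filter.1 hx).2)
  have hBsle : Bs.sum ≤ Sp := by rw [hSp]; exact le_add_right le_rfl
  -- chunks for the blocks
  obtain ⟨δb, hδb1, hδb2⟩ := choose_chunks
    (fun (B : Multiset G) (V : Finset (ZMod q)) =>
      Multiset.card B ≤ V.card ∧ (∀ v ∈ V, C.Ach B v) ∧ B ≠ 0) Bs
    (fun B hB => by
      obtain ⟨V, hV1, hV2⟩ := C.master hq hzpf
        (le_trans (le_trans (le_list_sum hB) hBsle) (Multiset.filter_le _ _)) (hBs B hB)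
      exact ⟨V, hV1, hV2, C.good_ne_zero (hBs B hB)⟩)
  -- chunks for the singletons
  set δ0 : List (Multiset G × Finset (ZMod q)) :=
    S0.toList.map (fun x => ({x}, {C.a x})) with hδ0def
  have hδ0sum : (δ0.map Prod.fst).sum = S0 := by
    rw [hδ0def, List.map_map]
    have : (Prod.fst ∘ fun x => (({x} : Multiset G), ({C.a x} : Finset (ZMod q))))
        = fun x => ({x} : Multiset G) := rfl
    rw [this, list_sum_singleton, Multiset.coe_toList]
  have hδ0props : ∀ c ∈ δ0, Multiset.card c.1 ≤ c.2.card ∧ (∀ v ∈ c.2, C.Ach c.1 v)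
      ∧ c.1 ≠ (0 : Multiset G) := by
    intro c hc
    rw [hδ0def, List.mem_map] at hc
    obtain ⟨x, hx, rfl⟩ := hc
    have hxS0 : x ∈ S0 := by rwa [← Multiset.mem_toList]
    have hex : C.e x = 0 := (Multiset.mem_filter.1 hxS0).2
    refine ⟨by simp, ?_, by simp⟩
    intro v hv
    rw [Finset.mem_singleton] at hv
    subst hv
    exact ⟨[x], rfl, by rw [List.prod_cons, List.prod_nil, mul_one]; exact C.eq_A x hex⟩
  set δ := δb ++ δ0 with hδdef
  have hδprops : ∀ c ∈ δ, Multiset.card c.1 ≤ c.2.card ∧ (∀ v ∈ c.2, C.Ach c.1 v)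
      ∧ c.1 ≠ (0 : Multiset G) := by
    intro c hc
    rcases List.mem_append.1 hc with h | h
    · exact hδb2 c h
    · exact hδ0props c h
  have hδsum : (δ.map Prod.fst).sum = Bs.sum + S0 := by
    rw [hδdef, List.map_append, List.sum_append, hδb1, hδ0sum]
  have hδsumS : (δ.map Prod.fst).sum ≤ S := by
    rw [hδsum, ← hS]
    rw [add_comm S0 Sp, hSp]
    exact add_le_add (le_add_right le_rfl) le_rfl
  -- every chunk's value set avoids 0
  have h0free : ∀ c ∈ δ, (0 : ZMod q) ∉ c.2 := by
    intro c hc h0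
    obtain ⟨-, hach, hne⟩ := hδprops c hc
    have hachc := hach 0 h0
    obtain ⟨l, hl, hp⟩ := hachc
    rw [C.A_zero] at hp
    exact hzpf c.1 (le_trans (le_list_sum (by
      exact List.mem_map.2 ⟨c, hc, rfl⟩)) hδsumS) hne ⟨l, hl, hp⟩
  -- total cardinalities
  have hcardsum : Multiset.card S0 + Multiset.card Sp = Multiset.card S := by
    rw [← Multiset.card_add, hS]
  have hcardSp : (Bs.map Multiset.card).sum + Multiset.card L = Multiset.card Sp := by
    rw [hSp, Multiset.card_add, card_list_sum]
  -- value-count sum is large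
  have hvals : Multiset.card S ≤ 3 + ((δ.map (fun c => c.2.card)).sum + 0) := by
    have h1 : (Bs.map Multiset.card).sum + Multiset.card S0
        ≤ (δ.map (fun c => c.2.card)).sum := by
      have h2 : (δ.map (fun c => Multiset.card c.1)).sum ≤ (δ.map (fun c => c.2.card)).sum := by
        apply List.sum_le_sum
        intro c hc
        exact (hδprops c hc).1
      have h3 : (δ.map (fun c => Multiset.card c.1)).sum
          = (Bs.map Multiset.card).sum + Multiset.card S0 := by
        rw [hδdef, List.map_append, List.sum_append]
        congr 1
        · rw [← hδb1, List.map_map]; rfl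
        · rw [hδ0def, List.map_map]
          have : ((fun c : Multiset G × Finset (ZMod q) => Multiset.card c.1) ∘
              fun x => (({x} : Multiset G), ({C.a x} : Finset (ZMod q))))
              = fun _ => 1 := by funext x; simp
          rw [this, list_sum_ones, Multiset.length_toList]
      omega
    omega
  by_cases hδnil : δ = []
  · have hz : (δ.map (fun c => c.2.card)).sum = 0 := by rw [hδnil]; rfl
    have := hq.two_le
    omega
  · obtain ⟨c₁, δt, hδeq⟩ := List.exists_cons_of_ne_nil hδnil
    have hc₁δ : c₁ ∈ δ := by rw [hδeq]; exact List.mem_cons_self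
    obtain ⟨hc₁card, hc₁ach, hc₁ne⟩ := hδprops c₁ hc₁δ
    have hc₁pos : 0 < Multiset.card c₁.1 := Multiset.card_pos.2 hc₁ne
    have hc₁V : c₁.2.Nonempty := by rw [← Finset.card_pos]; omega
    have hwc := wopt_card (G := G) hq δt
      (fun c hc => h0free c (by rw [hδeq]; exact List.mem_cons_of_mem _ hc))
    have hwne : (Wopt (G := G) δt).Nonempty := by
      rw [← Finset.card_pos]
      have := hq.two_le
      omega
    have hcd := ZMod.cauchy_davenport hq hc₁V hwne
    -- 0 is not in the total sumset
    have h0W : (0 : ZMod q) ∉ c₁.2 + Wopt (G := G) δt := by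
      intro h0
      rw [Finset.mem_add] at h0
      obtain ⟨y, hy, z, hz, hyz⟩ := h0
      obtain ⟨T', hT', hachT'⟩ := C.wopt_ach δt
        (fun c hc => (hδprops c (by rw [hδeq]; exact List.mem_cons_of_mem _ hc)).2.1) z hz
      have hach := C.ach_add (hc₁ach y hy) hachT'
      rw [hyz] at hach
      obtain ⟨l, hl, hp⟩ := hach
      rw [C.A_zero] at hp
      have hTS : c₁.1 + T' ≤ S := by
        refine le_trans ?_ hδsumS
        rw [hδeq, List.map_cons, List.sum_cons]
        exact add_le_add le_rfl hT'
      have hTne : c₁.1 + T' ≠ 0 := by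
        intro h
        have h2 := congrArg Multiset.card h
        rw [Multiset.card_add, Multiset.card_zero] at h2
        omega
      exact hzpf _ hTS hTne ⟨l, hl, hp⟩
    have hWle : (c₁.2 + Wopt (G := G) δt).card ≤ q - 1 := by
      have hsub : c₁.2 + Wopt (G := G) δt ⊆ Finset.univ.erase 0 := by
        intro w hw
        rw [Finset.mem_erase]
        exact ⟨fun h => h0W (h ▸ hw), Finset.mem_univ _⟩
      have := Finset.card_le_card hsub
      rwa [Finset.card_erase_of_mem (Finset.mem_univ _), Finset.card_univ, ZMod.card] at this
    have hsplitvals : (δ.map (fun c => c.2.card)).sum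
        = c₁.2.card + (δt.map (fun c => c.2.card)).sum := by
      rw [hδeq, List.map_cons, List.sum_cons]
    have hq2 := hq.two_le
    have hc₁Vpos : 0 < c₁.2.card := Finset.card_pos.2 hc₁V
    omega


lemma A_one_pow (m : ℕ) : (C.A 1) ^ m = C.A (m : ZMod q) := by
  induction m with
  | zero => simpa using C.A_zero.symm
  | succ k ih =>
    rw [pow_succ, ih, C.A_mul]
    push_cast
    rfl

include C in
lemma lower_zpf (hq : q.Prime) (τ : G) (heτ : C.e τ = 1) :
    ZPF (Multiset.replicate (q - 1) (C.A 1) + Multiset.replicate 3 τ) := by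
  classical
  intro T hT hTne hP
  obtain ⟨l, hlT, hprod⟩ := hP
  have hq2 : 2 ≤ q := hq.two_le
  set x0 := C.A 1 with hx0def
  have hex0 : C.e x0 = 0 := C.e_A 1
  have hx0τ : x0 ≠ τ := by
    intro h
    rw [h, heτ] at hex0
    exact absurd hex0 (by decide)
  have hmem : ∀ x ∈ l, x = x0 ∨ x = τ := by
    intro x hx
    have hxT : x ∈ T := by rw [← hlT]; exact hx
    have := Multiset.mem_of_le hT hxT
    rcases Multiset.mem_add.1 this with h | h
    · exact Or.inl (Multiset.eq_of_mem_replicate h)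
    · exact Or.inr (Multiset.eq_of_mem_replicate h)
  have hesum : ∀ l' : List G, (∀ x ∈ l', x = x0 ∨ x = τ) →
      (l'.map C.e).sum = (l'.count τ : ZMod 4) := by
    intro l'
    induction l' with
    | nil => intro _; simp
    | cons y t ih =>
      intro hmem'
      have ht := ih (fun x hx => hmem' x (List.mem_cons_of_mem _ hx))
      rcases hmem' y (List.mem_cons_self) with rfl | rfl
      · rw [List.map_cons, List.sum_cons, hex0, zero_add, ht,
          List.count_cons_of_ne hx0τ]
      · rw [List.map_cons, List.sum_cons, heτ, ht, List.count_cons_self]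
        push_cast
        ring
  have hsum0 : ((l.count τ : ℕ) : ZMod 4) = 0 := by
    rw [← hesum l hmem, ← C.e_prod, hprod, C.e_one]
  have hcount3 : l.count τ ≤ 3 := by
    have h1 : l.count τ = T.count τ := by rw [← hlT, Multiset.coe_count]
    have h2 : T.count τ ≤ Multiset.count τ (Multiset.replicate (q - 1) x0 +
        Multiset.replicate 3 τ) := Multiset.count_le_of_le τ hT
    rw [Multiset.count_add, Multiset.count_replicate, Multiset.count_replicate] at h2
    rw [if_neg hx0τ, if_pos rfl, zero_add] at h2
    omega
  rcases Nat.eq_zero_or_pos (l.count τ) with hc0 | hcpos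
  · -- all terms are x0
    have hall : ∀ x ∈ l, x = x0 := by
      intro x hx
      rcases hmem x hx with h | h
      · exact h
      · exfalso
        rw [← h] at hc0
        exact absurd (List.count_eq_zero.1 hc0) (by rw [h] at hx ⊢; exact fun hh => hh hx)
    have hrep : l = List.replicate l.length x0 := List.eq_replicate_of_mem hall
    have hlen1 : 1 ≤ l.length := by
      rcases l with _ | ⟨y, t⟩
      · exfalso; apply hTne; rw [← hlT]; rfl
      · simp
    have hlenq : l.length ≤ q - 1 := by
      have h1 : l.count x0 = l.length := by
        rw [hrep]; simp
      have h2 : l.count x0 = T.count x0 := by rw [← hlT, Multiset.coe_count]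
      have h3 : T.count x0 ≤ Multiset.count x0 (Multiset.replicate (q - 1) x0 +
          Multiset.replicate 3 τ) := Multiset.count_le_of_le x0 hT
      rw [Multiset.count_add, Multiset.count_replicate, Multiset.count_replicate] at h3
      rw [if_pos rfl, if_neg (Ne.symm hx0τ), add_zero] at h3
      omega
    have hprod' : (1 : G) = C.A ((l.length : ℕ) : ZMod q) := by
      rw [← hprod, hrep, List.prod_replicate, List.length_replicate, hx0def]
      exact C.A_one_pow _
    have : ((l.length : ℕ) : ZMod q) = 0 := C.A_eq_one_iff.1 hprod'.symm
    have hdvd : q ∣ l.length := (ZMod.natCast_eq_zero_iff _ _).1 this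
    have := Nat.le_of_dvd (by omega) hdvd
    omega
  · -- 1 ≤ count ≤ 3 but sum is 0 mod 4
    interval_cases h : l.count τ <;> exact absurd hsum0 (by decide)


end DavCoord

theorem stmt17 (q : ℕ) (hq : q.Prime) (hqodd : Odd q)
    (r : ℕ) (hr1 : 1 ≤ r) (hr2 : r ≤ q - 1) (hr : (q : ℤ) ∣ (r : ℤ) ^ 2 + 1)
    (G : Type*) [Group G] [Finite G] (hcard : Nat.card G = 4 * q)
    (α τ : G) (hα : α ^ q = 1) (hτ : τ ^ 4 = 1)
    (hrel : α * τ = τ * α ^ r)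
    (hgen : Subgroup.closure ({α, τ} : Set G) = ⊤) :
    smallDavenport G = q + 2 := by
  classical
  haveI hfact : Fact q.Prime := ⟨hq⟩
  haveI : NeZero q := ⟨hq.ne_zero⟩
  haveI : Fact (1 < 4) := ⟨by norm_num⟩
  have hq2 : 2 ≤ q := hq.two_le
  have hq3 : 3 ≤ q := by
    rcases hqodd with ⟨k, hk⟩
    omega
  haveI : Fact (1 < q) := ⟨by omega⟩
  set R : ZMod q := (r : ZMod q) with hRdef
  have hR2 : R ^ 2 = -1 := by
    have h0 : (((r : ℤ) ^ 2 + 1 : ℤ) : ZMod q) = 0 := by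
      rw [ZMod.intCast_zmod_eq_zero_iff_dvd]
      exact hr
    push_cast at h0
    linear_combination h0
  have h2ne : (2 : ZMod q) ≠ 0 := by
    intro h
    have h' : ((2 : ℕ) : ZMod q) = 0 := by exact_mod_cast h
    have hdvd := (ZMod.natCast_eq_zero_iff 2 q).1 h'
    have := Nat.le_of_dvd (by norm_num) hdvd
    omega
  have hneg1 : (-1 : ZMod q) ≠ 1 := by
    intro h
    apply h2ne
    linear_combination -h
  have hR4 : R ^ 4 = 1 := by
    have h4 : R ^ 4 = (R ^ 2) ^ 2 := by ring
    rw [h4, hR2]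
    ring
  have hR1 : R ≠ 1 := by
    intro h
    rw [h, one_pow] at hR2
    exact hneg1 hR2.symm
  have hR0 : R ≠ 0 := by
    intro h
    rw [h] at hR2
    have h1 : (0 : ZMod q) = -1 := by rw [← hR2]; ring
    have h2 : (1 : ZMod q) = 0 := by linear_combination h1
    exact one_ne_zero h2
  have hval4 : ∀ f : ZMod 4, ((f.val : ℕ) : ZMod 4) = f := fun f => ZMod.natCast_rightInverse f
  have hvalq : ∀ u : ZMod q, ((u.val : ℕ) : ZMod q) = u := fun u => ZMod.natCast_rightInverse u
  have hRpow_ne : ∀ k, k < 4 → R ^ k = 1 → k = 0 := by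
    intro k hk hpow
    interval_cases k
    · rfl
    · rw [pow_one] at hpow
      exact absurd hpow hR1
    · rw [hR2] at hpow
      exact absurd hpow hneg1
    · exfalso
      have h3 : R ^ 3 = R ^ 2 * R := by ring
      rw [hR2] at h3
      rw [h3] at hpow
      have hRneg : R = -1 := by linear_combination -hpow
      rw [hRneg] at hR2
      have h1 : (1 : ZMod q) = -1 := by rw [← hR2]; ring
      exact hneg1 h1.symm
  have hRinj : Function.Injective (fun f : ZMod 4 => R ^ f.val) := by
    have key : ∀ a b : ℕ, a ≤ b → b < 4 → R ^ a = R ^ b → a = b := by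
      intro a b hab hb hpow
      have hsplit : R ^ b = R ^ a * R ^ (b - a) := by
        rw [← pow_add]
        congr 1
        omega
      rw [hsplit] at hpow
      have hRa : R ^ a ≠ 0 := pow_ne_zero _ hR0
      have h1 : R ^ (b - a) = 1 := by
        apply mul_left_cancel₀ hRa
        rw [mul_one, ← hpow]
      have := hRpow_ne _ (by omega) h1
      omega
    intro f f' h
    simp only at h
    have hlt : f.val < 4 := ZMod.val_lt f
    have hlt' : f'.val < 4 := ZMod.val_lt f'
    have hv : f.val = f'.val := by
      rcases le_total f.val f'.val with hle | hle
      · exact key _ _ hle hlt' h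
      · exact (key _ _ hle hlt h.symm).symm
    rw [← hval4 f, ← hval4 f', hv]
  have hαmod : ∀ m : ℕ, α ^ m = α ^ (m % q) := by
    intro m
    conv_lhs => rw [← Nat.div_add_mod m q]
    rw [pow_add, pow_mul, hα, one_pow, one_mul]
  have hτmod : ∀ m : ℕ, τ ^ m = τ ^ (m % 4) := by
    intro m
    conv_lhs => rw [← Nat.div_add_mod m 4]
    rw [pow_add, pow_mul, hτ, one_pow, one_mul]
  have hαcast : ∀ m m' : ℕ, ((m : ZMod q) = (m' : ZMod q)) → α ^ m = α ^ m' := by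
    intro m m' h
    rw [hαmod m, hαmod m', (ZMod.natCast_eq_natCast_iff' m m' q).1 h]
  have hτcast : ∀ m m' : ℕ, ((m : ZMod 4) = (m' : ZMod 4)) → τ ^ m = τ ^ m' := by
    intro m m' h
    rw [hτmod m, hτmod m', (ZMod.natCast_eq_natCast_iff' m m' 4).1 h]
  have comm1 : ∀ j : ℕ, α ^ j * τ = τ * α ^ (j * r) := by
    intro j
    induction j with
    | zero => simp
    | succ k ih =>
      have : α ^ (k + 1) * τ = α ^ k * (α * τ) := by
        rw [pow_succ, mul_assoc]
      rw [this, hrel, ← mul_assoc, ih, mul_assoc, ← pow_add]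
      congr 1
      ring
  have comm2 : ∀ k j : ℕ, α ^ j * τ ^ k = τ ^ k * α ^ (j * r ^ k) := by
    intro k
    induction k with
    | zero => intro j; simp
    | succ n ih =>
      intro j
      have h1 : α ^ j * τ ^ (n + 1) = (α ^ j * τ ^ n) * τ := by
        rw [pow_succ, mul_assoc]
      rw [h1, ih j, mul_assoc, comm1, ← mul_assoc, ← pow_succ]
      congr 1
      ring
  have hmulform : ∀ i j k l : ℕ,
      (τ ^ i * α ^ j) * (τ ^ k * α ^ l) = τ ^ (i + k) * α ^ (j * r ^ k + l) := by
    intro i j k l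
    calc (τ ^ i * α ^ j) * (τ ^ k * α ^ l) = τ ^ i * (α ^ j * τ ^ k) * α ^ l := by
          simp only [mul_assoc]
      _ = τ ^ i * (τ ^ k * α ^ (j * r ^ k)) * α ^ l := by rw [comm2]
      _ = τ ^ (i + k) * α ^ (j * r ^ k + l) := by
          rw [pow_add, pow_add]
          simp only [mul_assoc]
  have hHmem : ∀ g : G, ∃ i j : ℕ, g = τ ^ i * α ^ j := by
    set H : Subgroup G :=
      { carrier := {g | ∃ i j : ℕ, g = τ ^ i * α ^ j}
        one_mem' := ⟨0, 0, by simp⟩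
        mul_mem' := by
          rintro x y ⟨i, j, rfl⟩ ⟨k, l, rfl⟩
          exact ⟨i + k, j * r ^ k + l, hmulform i j k l⟩
        inv_mem' := by
          rintro x ⟨i, j, rfl⟩
          have hm4 : i % 4 < 4 := Nat.mod_lt _ (by norm_num)
          have hmq : j % q < q := Nat.mod_lt _ (by omega)
          refine ⟨4 - i % 4, (q - j % q) * r ^ (4 - i % 4), ?_⟩
          apply inv_eq_of_mul_eq_one_right
          rw [hmulform]
          have h4 : (i + (4 - i % 4)) % 4 = 0 := by omega
          have hqq : (j * r ^ (4 - i % 4) + (q - j % q) * r ^ (4 - i % 4))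
              = (j + (q - j % q)) * r ^ (4 - i % 4) := by ring
          have hjq : (j + (q - j % q)) = q * (j / q + 1) := by
            have hdm := Nat.div_add_mod j q
            have hexp : q * (j / q + 1) = q * (j / q) + q := by ring
            omega
          rw [hτmod (i + (4 - i % 4)), h4, pow_zero, one_mul, hqq, hjq,
            hαmod (q * (j / q + 1) * r ^ (4 - i % 4))]
          have hmod0 : (q * (j / q + 1) * r ^ (4 - i % 4)) % q = 0 := by
            have : q * (j / q + 1) * r ^ (4 - i % 4)
                = q * ((j / q + 1) * r ^ (4 - i % 4)) := by ring
            rw [this,  Nat.mul_mod_right]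
          rw [hmod0, pow_zero] }
    intro g
    have htop : (⊤ : Subgroup G) ≤ H := by
      rw [← hgen]
      apply (Subgroup.closure_le H).2
      intro x hx
      rcases Set.mem_insert_iff.1 hx with rfl | hx'
      · exact ⟨0, 1, by simp⟩
      · rw [Set.mem_singleton_iff] at hx'
        subst hx'
        exact ⟨1, 0, by simp⟩
    exact htop (Subgroup.mem_top g)
  set Φ : ZMod 4 × ZMod q → G := fun p => τ ^ p.1.val * α ^ p.2.val with hΦdef
  have hΦmul : ∀ p p' : ZMod 4 × ZMod q,
      Φ p * Φ p' = Φ (p.1 + p'.1, p.2 * R ^ (p'.1).val + p'.2) := by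
    rintro ⟨f, u⟩ ⟨f', u'⟩
    show (τ ^ f.val * α ^ u.val) * (τ ^ f'.val * α ^ u'.val)
        = τ ^ (f + f').val * α ^ (u * R ^ f'.val + u').val
    rw [hmulform]
    have hτeq : τ ^ (f.val + f'.val) = τ ^ ((f + f').val) := by
      apply hτcast
      push_cast
      rw [hval4 f, hval4 f', hval4 (f + f')]
    have hαeq : α ^ (u.val * r ^ f'.val + u'.val) = α ^ ((u * R ^ f'.val + u').val) := by
      apply hαcast
      push_cast
      rw [hvalq u, hvalq u', hvalq (u * R ^ f'.val + u')]
    rw [hτeq, hαeq]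
  have hΦsurj : Function.Surjective Φ := by
    intro g
    obtain ⟨i, j, rfl⟩ := hHmem g
    refine ⟨((i : ZMod 4), (j : ZMod q)), ?_⟩
    show τ ^ (ZMod.val (i : ZMod 4)) * α ^ (ZMod.val (j : ZMod q)) = τ ^ i * α ^ j
    rw [ZMod.val_natCast, ZMod.val_natCast, ← hτmod, ← hαmod]
  have hcard' : Nat.card (ZMod 4 × ZMod q) = Nat.card G := by
    rw [Nat.card_prod, Nat.card_zmod, Nat.card_zmod, hcard]
  have hΦbij : Function.Bijective Φ := (Nat.bijective_iff_surjective_and_card Φ).2 ⟨hΦsurj, hcard'⟩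
  set E : (ZMod 4 × ZMod q) ≃ G := Equiv.ofBijective Φ hΦbij with hEdef
  have hE1 : ∀ p, E.symm (Φ p) = p := fun p => E.symm_apply_apply p
  have hE2 : ∀ g, Φ (E.symm g) = g := fun g => E.apply_symm_apply g
  have hΦ0 : ∀ u : ZMod q, Φ (0, u) = α ^ u.val := by
    intro u
    show τ ^ (ZMod.val (0 : ZMod 4)) * α ^ u.val = _
    rw [ZMod.val_zero, pow_zero, one_mul]
  set C : DavCoord q G :=
    { R := R
      e := fun g => (E.symm g).1
      a := fun g => (E.symm g).2
      β := α
      hRinj := hRinj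
      hR0 := hR0
      hR4 := hR4
      e_mul := by
        intro g h
        obtain ⟨p, rfl⟩ := hΦsurj g
        obtain ⟨p', rfl⟩ := hΦsurj h
        show (E.symm (Φ p * Φ p')).1 = (E.symm (Φ p)).1 + (E.symm (Φ p')).1
        rw [hΦmul, hE1, hE1, hE1]
      a_mul := by
        intro g h
        obtain ⟨p, rfl⟩ := hΦsurj g
        obtain ⟨p', rfl⟩ := hΦsurj h
        show (E.symm (Φ p * Φ p')).2
            = (E.symm (Φ p)).2 * R ^ ((E.symm (Φ p')).1).val + (E.symm (Φ p')).2
        rw [hΦmul, hE1, hE1, hE1]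
      e_pow := by
        intro u
        show (E.symm (α ^ u.val)).1 = 0
        rw [← hΦ0, hE1]
      a_pow := by
        intro u
        show (E.symm (α ^ u.val)).2 = u
        rw [← hΦ0, hE1]
      recon := by
        intro g hg
        conv_lhs => rw [← hE2 g]
        show τ ^ ((E.symm g).1).val * α ^ ((E.symm g).2).val = α ^ ((E.symm g).2).val
        have hg' : (E.symm g).1 = 0 := hg
        rw [hg', ZMod.val_zero, pow_zero, one_mul] } with hCdef
  have heτ : C.e τ = 1 := by
    have hτΦ : τ = Φ (1, 0) := by
      show τ = τ ^ (ZMod.val (1 : ZMod 4)) * α ^ (ZMod.val (0 : ZMod q))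
      rw [ZMod.val_one, ZMod.val_zero, pow_one, pow_zero, mul_one]
    show (E.symm τ).1 = 1
    rw [hτΦ, hE1]
  have hub : ∀ n ∈ {n | ∃ S : Multiset G, Multiset.card S = n ∧
      ∀ T : Multiset G, T ≤ S → T ≠ 0 → ¬ IsProductOne T}, n ≤ q + 2 := by
    rintro n ⟨S, hcardS, hzpf⟩
    rw [← hcardS]
    exact C.card_le hq hzpf
  have hmem : (q + 2) ∈ {n | ∃ S : Multiset G, Multiset.card S = n ∧
      ∀ T : Multiset G, T ≤ S → T ≠ 0 → ¬ IsProductOne T} := by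
    refine ⟨Multiset.replicate (q - 1) (C.A 1) + Multiset.replicate 3 τ, ?_,
      C.lower_zpf hq τ heτ⟩
    rw [Multiset.card_add, Multiset.card_replicate, Multiset.card_replicate]
    omega
  rw [smallDavenport]
  exact IsGreatest.csSup_eq ⟨hmem, hub⟩
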